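/- Weak (1,1) bound for dyadic localized maximal operator against a weight: with notation as below, for every λ > 0 and every pair of nonnegative measurable f, g on ℝⁿ, ∫_{{x : M^Δ_{V,η₂}f(x) > λ}} g(y) dy ≤ C λ^{-1} ∫_{ℝⁿ} f(x) M_{V,η₁}g(x) dx, where η₁ = η₂/(l₀+1) and C depends only on n, η₂, C₀, l₀. -/

import Mathlib

open MeasureTheory Metric ENNReal

noncomputable section

/-- Axis-parallel cube centered at `x` with sidelength `r`. -/
def cube {n : ℕ} (x : EuclideanSpace ℝ (Fin n)) (r : ℝ) : Set (EuclideanSpace ℝ (Fin n)) :=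
  {y | ∀ i, |y i - x i| ≤ r / 2}

/-- The localized maximal operator `M_{V,θ}` over cubes. -/
def MVcube {n : ℕ} (ρ : EuclideanSpace ℝ (Fin n) → ℝ) (θ : ℝ)
    (f : EuclideanSpace ℝ (Fin n) → ℝ≥0∞) (x : EuclideanSpace ℝ (Fin n)) : ℝ≥0∞ :=
  ⨆ (z : EuclideanSpace ℝ (Fin n)) (r : ℝ) (_ : 0 < r ∧ x ∈ cube z r),
    (ENNReal.ofReal ((1 + r / ρ z) ^ θ) * volume (cube z r))⁻¹ * ∫⁻ y in cube z r, f y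

/-- The dyadic cube of generation `k` indexed by `m`. -/
def dyadicCube {n : ℕ} (k : ℤ) (m : Fin n → ℤ) : Set (EuclideanSpace ℝ (Fin n)) :=
  {y | ∀ i, (m i : ℝ) * 2 ^ k ≤ y i ∧ y i < ((m i : ℝ) + 1) * 2 ^ k}

/-- `ψ_θ(Q) = (1 + sidelength(Q)/max_Q ρ)^θ` for a dyadic cube. -/
def psiD {n : ℕ} (ρ : EuclideanSpace ℝ (Fin n) → ℝ) (θ : ℝ) (k : ℤ) (m : Fin n → ℤ) : ℝ :=
  (1 + (2 : ℝ) ^ k / sSup (ρ '' dyadicCube k m)) ^ θ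

/-- The dyadic localized maximal operator `M^Δ_{V,θ}`. -/
def MDyadic {n : ℕ} (ρ : EuclideanSpace ℝ (Fin n) → ℝ) (θ : ℝ)
    (f : EuclideanSpace ℝ (Fin n) → ℝ≥0∞) (x : EuclideanSpace ℝ (Fin n)) : ℝ≥0∞ :=
  ⨆ (k : ℤ) (m : Fin n → ℤ) (_ : x ∈ dyadicCube k m),
    (ENNReal.ofReal (psiD ρ θ k m) * volume (dyadicCube k m))⁻¹ *
      ∫⁻ y in dyadicCube k m, f y

/-! ### Auxiliary geometric and measure-theoretic lemmas -/

lemma cube_eq_pre {n : ℕ} (z : EuclideanSpace ℝ (Fin n)) (r : ℝ) :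
    cube z r = ((MeasurableEquiv.toLp 2 (Fin n → ℝ)).symm) ⁻¹'
      (Set.univ.pi fun i => Set.Icc (z i - r/2) (z i + r/2)) := by
  ext y
  simp only [cube, Set.mem_setOf_eq, Set.mem_preimage, Set.mem_univ_pi, Set.mem_Icc,
    MeasurableEquiv.coe_toLp_symm,
    abs_sub_le_iff]
  constructor
  · intro h i; have := h i; constructor <;> linarith [this.1, this.2]
  · intro h i; have := h i; constructor <;> linarith [this.1, this.2]

lemma dyadicCube_eq_pre {n : ℕ} (k : ℤ) (m : Fin n → ℤ) :
    dyadicCube k m = ((MeasurableEquiv.toLp 2 (Fin n → ℝ)).symm) ⁻¹'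
      (Set.univ.pi fun i => Set.Ico ((m i : ℝ) * 2 ^ k) (((m i : ℝ) + 1) * 2 ^ k)) := by
  ext y
  simp only [dyadicCube, Set.mem_setOf_eq, Set.mem_preimage, Set.mem_univ_pi, Set.mem_Ico,
    MeasurableEquiv.coe_toLp_symm]

lemma measurableSet_cube {n : ℕ} (z : EuclideanSpace ℝ (Fin n)) (r : ℝ) :
    MeasurableSet (cube z r) := by
  rw [cube_eq_pre]
  exact (MeasurableSet.univ_pi fun i => measurableSet_Icc).preimage
    ((MeasurableEquiv.toLp 2 (Fin n → ℝ)).symm).measurable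

lemma measurableSet_dyadicCube {n : ℕ} (k : ℤ) (m : Fin n → ℤ) :
    MeasurableSet (dyadicCube k m) := by
  rw [dyadicCube_eq_pre]
  exact (MeasurableSet.univ_pi fun i => measurableSet_Ico).preimage
    ((MeasurableEquiv.toLp 2 (Fin n → ℝ)).symm).measurable

lemma volume_cube {n : ℕ} (z : EuclideanSpace ℝ (Fin n)) (r : ℝ) :
    volume (cube z r) = (ENNReal.ofReal r) ^ n := by
  rw [cube_eq_pre, (EuclideanSpace.volume_preserving_symm_measurableEquiv_toLp (Fin n)).measure_preimage
    ((MeasurableSet.univ_pi fun i => measurableSet_Icc).nullMeasurableSet), volume_pi_pi]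
  simp [Real.volume_Icc]

lemma volume_dyadicCube {n : ℕ} (k : ℤ) (m : Fin n → ℤ) :
    volume (dyadicCube k m) = (ENNReal.ofReal ((2:ℝ) ^ k)) ^ n := by
  rw [dyadicCube_eq_pre, (EuclideanSpace.volume_preserving_symm_measurableEquiv_toLp (Fin n)).measure_preimage
    ((MeasurableSet.univ_pi fun i => measurableSet_Ico).nullMeasurableSet), volume_pi_pi]
  have : ∀ x : Fin n, ((m x : ℝ) + 1) * 2 ^ k - (m x : ℝ) * 2 ^ k = 2 ^ k := fun x => by ring
  simp [Real.volume_Ico, this, Finset.prod_const]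

lemma dyadic1D {k k' : ℤ} (hkk : k ≤ k') (a b : ℤ) (y : ℝ)
    (h1 : (a : ℝ) * 2 ^ k ≤ y) (h2 : y < ((a : ℝ) + 1) * 2 ^ k)
    (h3 : (b : ℝ) * 2 ^ k' ≤ y) (h4 : y < ((b : ℝ) + 1) * 2 ^ k') :
    (b : ℝ) * 2 ^ k' ≤ (a : ℝ) * 2 ^ k ∧ ((a : ℝ) + 1) * 2 ^ k ≤ ((b : ℝ) + 1) * 2 ^ k' := by
  have h2k : (0:ℝ) < 2 ^ k := by positivity
  set c : ℕ := (k' - k).toNat with hc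
  have hkc : k' = k + (c : ℤ) := by
    rw [hc, Int.toNat_of_nonneg (by omega)]; ring
  have hpow : (2:ℝ) ^ k' = 2 ^ k * (2:ℝ) ^ c := by
    rw [hkc, zpow_add₀ (two_ne_zero), zpow_natCast]
  set N : ℤ := b * 2 ^ c with hN
  have hNr : ((N : ℝ)) = (b : ℝ) * 2 ^ c := by push_cast [hN]; ring
  have hb1 : ((b:ℝ) + 1) * 2 ^ k' = ((N : ℝ) + 2 ^ c) * 2 ^ k := by
    rw [hpow, hNr]; ring
  have hb0 : (b : ℝ) * 2 ^ k' = (N : ℝ) * 2 ^ k := by rw [hpow, hNr]; ring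
  have hNa : N ≤ a := by
    have h5 : (N : ℝ) * 2 ^ k < ((a:ℝ) + 1) * 2 ^ k := lt_of_le_of_lt (hb0 ▸ h3) h2
    have h6 : (N : ℝ) < (a : ℝ) + 1 := (mul_lt_mul_iff_of_pos_right h2k).mp h5
    have : N < a + 1 := by exact_mod_cast h6
    omega
  have haN : a + 1 ≤ N + 2 ^ c := by
    have h5 : (a:ℝ) * 2 ^ k < ((N:ℝ) + 2 ^ c) * 2 ^ k := lt_of_le_of_lt h1 (hb1 ▸ h4)
    have h' : (a : ℝ) < (N : ℝ) + 2 ^ c := (mul_lt_mul_iff_of_pos_right h2k).mp h5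
    have : a < N + 2 ^ c := by exact_mod_cast h'
    omega
  constructor
  · rw [hb0]
    have : (N : ℝ) ≤ a := by exact_mod_cast hNa
    nlinarith
  · rw [hb1]
    have : ((a:ℝ)) + 1 ≤ (N : ℝ) + 2 ^ c := by exact_mod_cast haN
    nlinarith

lemma dyadic_nested {n : ℕ} {k k' : ℤ} {m m' : Fin n → ℤ} (hkk : k ≤ k')
    (h : (dyadicCube k m ∩ dyadicCube k' m' : Set (EuclideanSpace ℝ (Fin n))).Nonempty) :
    dyadicCube k m ⊆ dyadicCube k' m' := by
  obtain ⟨x, hx1, hx2⟩ := h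
  intro w hw i
  obtain ⟨hL, hR⟩ := dyadic1D hkk (m i) (m' i) (x i) (hx1 i).1 (hx1 i).2 (hx2 i).1 (hx2 i).2
  exact ⟨le_trans hL (hw i).1, lt_of_lt_of_le (hw i).2 hR⟩

def dcenter {n : ℕ} (k : ℤ) (m : Fin n → ℤ) : EuclideanSpace ℝ (Fin n) :=
  (WithLp.equiv 2 (Fin n → ℝ)).symm (fun i => ((m i : ℝ) + 1/2) * 2 ^ k)

lemma dcenter_apply {n : ℕ} (k : ℤ) (m : Fin n → ℤ) (i : Fin n) :
    dcenter k m i = ((m i : ℝ) + 1/2) * 2 ^ k := rfl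

lemma dcenter_mem {n : ℕ} (k : ℤ) (m : Fin n → ℤ) : dcenter k m ∈ dyadicCube k m := by
  intro i
  have h2k : (0:ℝ) < 2 ^ k := by positivity
  rw [dcenter_apply]
  constructor <;> nlinarith

lemma dyadic_subset_cube {n : ℕ} (k : ℤ) (m : Fin n → ℤ) :
    dyadicCube k m ⊆ cube (dcenter k m) ((2:ℝ) ^ k) := by
  intro y hy i
  have h2k : (0:ℝ) < 2 ^ k := by positivity
  rw [dcenter_apply, abs_sub_le_iff]
  obtain ⟨h1, h2⟩ := hy i
  constructor <;> nlinarith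

lemma dist_dcenter_le {n : ℕ} (k : ℤ) (m : Fin n → ℤ) {y : EuclideanSpace ℝ (Fin n)}
    (hy : y ∈ cube (dcenter k m) ((2:ℝ)^k)) :
    dist (dcenter k m) y ≤ Real.sqrt n * ((2:ℝ)^k / 2) := by
  have h2k : (0:ℝ) < 2 ^ k := by positivity
  rw [EuclideanSpace.dist_eq]
  have hb : ∀ i, dist (dcenter k m i) (y i) ^ 2 ≤ ((2:ℝ)^k/2)^2 := by
    intro i
    have := hy i
    rw [Real.dist_eq]
    have h1 : |dcenter k m i - y i| = |y i - dcenter k m i| := abs_sub_comm _ _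
    rw [h1]
    exact pow_le_pow_left₀ (abs_nonneg _) this 2
  calc Real.sqrt (∑ i, dist (dcenter k m i) (y i) ^ 2)
      ≤ Real.sqrt (∑ _i : Fin n, ((2:ℝ)^k/2)^2) :=
        Real.sqrt_le_sqrt (Finset.sum_le_sum fun i _ => hb i)
    _ = Real.sqrt n * ((2:ℝ)^k/2) := by
        rw [Finset.sum_const, Finset.card_univ, Fintype.card_fin, nsmul_eq_mul,
          Real.sqrt_mul (by positivity), Real.sqrt_sq (by positivity)]

/-! ### The key analytic inequality -/

lemma key_ineq {C₀ α β t : ℝ} (hC₀ : 1 ≤ C₀) (hα0 : 0 ≤ α) (hα1 : α ≤ 1)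
    (hβ : 0 ≤ β) (ht : 0 ≤ t) :
    (C₀ * max 1 β)⁻¹ * (1 + t) ^ (1 - α) ≤ 1 + t / (C₀ * (1 + β * t) ^ α) := by
  set M := max 1 β with hM
  have hM1 : 1 ≤ M := le_max_left _ _
  have hβM : β ≤ M := le_max_right _ _
  have h1t : (0:ℝ) < 1 + t := by linarith
  have h1bt : (0:ℝ) < 1 + β * t := by positivity
  have hA1 : 1 ≤ C₀ * M := one_le_mul_of_one_le_of_one_le hC₀ hM1
  have hA0 : (0:ℝ) < C₀ * M := lt_of_lt_of_le one_pos hA1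
  have hpow_pos : (0:ℝ) < (1 + β * t) ^ α := Real.rpow_pos_of_pos h1bt α
  have hpow_pos' : (0:ℝ) < (1 + t) ^ α := Real.rpow_pos_of_pos h1t α
  have step1 : (1 + β * t) ^ α ≤ M * (1 + t) ^ α := by
    have h1 : 1 + β * t ≤ M * (1 + t) := by nlinarith
    have hMα : M ^ α ≤ M := by
      calc M ^ α ≤ M ^ (1:ℝ) := Real.rpow_le_rpow_of_exponent_le hM1 hα1
        _ = M := Real.rpow_one M
    calc (1 + β * t) ^ α ≤ (M * (1 + t)) ^ α := Real.rpow_le_rpow h1bt.le h1 hα0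
      _ = M ^ α * (1 + t) ^ α := Real.mul_rpow (by linarith) h1t.le
      _ ≤ M * (1 + t) ^ α := by nlinarith
  have step2 : t / (C₀ * M * (1 + t) ^ α) ≤ t / (C₀ * (1 + β * t) ^ α) := by
    apply div_le_div_of_nonneg_left ht (by positivity) ?_
    calc C₀ * (1 + β * t) ^ α ≤ C₀ * (M * (1 + t) ^ α) := by nlinarith
      _ = C₀ * M * (1 + t) ^ α := by ring
  have hone : (1:ℝ) ≤ (1 + t) ^ α := by
    calc (1:ℝ) = (1 + t) ^ (0:ℝ) := (Real.rpow_zero _).symm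
      _ ≤ (1 + t) ^ α := Real.rpow_le_rpow_of_exponent_le (by linarith) hα0
  have step3 : (1 + t) ^ (1 - α) ≤ 1 + t / (1 + t) ^ α := by
    have e : (1 + t) ^ (1 - α) = (1 + t) / (1 + t) ^ α := by
      rw [Real.rpow_sub h1t, Real.rpow_one]
    rw [e, div_le_iff₀ hpow_pos']
    have e2 : (1 + t / (1 + t) ^ α) * (1 + t) ^ α = (1 + t) ^ α + t := by
      field_simp
    rw [e2]
    linarith
  calc (C₀ * M)⁻¹ * (1 + t) ^ (1 - α)
      ≤ (C₀ * M)⁻¹ * (1 + t / (1 + t) ^ α) := by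
        apply mul_le_mul_of_nonneg_left step3 (by positivity)
    _ = (C₀ * M)⁻¹ + t / (C₀ * M * (1 + t) ^ α) := by
        field_simp
    _ ≤ 1 + t / (C₀ * (1 + β * t) ^ α) := by
        have : (C₀ * M)⁻¹ ≤ 1 := by
          rw [inv_le_one_iff₀]; right; exact hA1
        linarith

/-! ### Lower bound for `ψ` via Shen's estimate -/

lemma psiD_lower {n : ℕ} (ρ : EuclideanSpace ℝ (Fin n) → ℝ) (hρ : ∀ x, 0 < ρ x)
    {l₀ C₀ : ℝ} (hl₀ : 0 < l₀) (hC₀ : 1 < C₀)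
    (hshen : ∀ x y : EuclideanSpace ℝ (Fin n),
      C₀⁻¹ * (1 + dist x y * (ρ x)⁻¹) ^ (-l₀) ≤ (ρ x)⁻¹ / (ρ y)⁻¹ ∧
        (ρ x)⁻¹ / (ρ y)⁻¹ ≤ C₀ * (1 + dist x y * (ρ x)⁻¹) ^ (l₀ / (l₀ + 1)))
    {η₂ : ℝ} (hη₂ : 0 < η₂) (k : ℤ) (m : Fin n → ℤ) :
    ((C₀ * max 1 (Real.sqrt n / 2)) ^ η₂)⁻¹ *
      (1 + (2:ℝ) ^ k / ρ (dcenter k m)) ^ (η₂ / (l₀ + 1)) ≤ psiD ρ η₂ k m := by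
  set z := dcenter k m with hz
  set r : ℝ := (2:ℝ) ^ k with hr
  have hrpos : 0 < r := by positivity
  have hρz : 0 < ρ z := hρ z
  set t : ℝ := r / ρ z with htdef
  have ht : 0 ≤ t := by positivity
  set α := l₀ / (l₀ + 1) with hα
  have hα0 : 0 ≤ α := by positivity
  have hα1 : α ≤ 1 := by
    rw [hα, div_le_one (by linarith)]; linarith
  set β := Real.sqrt n / 2 with hβdef
  have hβ : 0 ≤ β := by positivity
  have hub : ∀ y ∈ dyadicCube k m, ρ y ≤ C₀ * ρ z * (1 + β * t) ^ α := by
    intro y hy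
    have hd : dist z y * (ρ z)⁻¹ ≤ β * t := by
      have h1 : dist z y ≤ Real.sqrt n * (r / 2) := dist_dcenter_le k m (dyadic_subset_cube k m hy)
      have h2 : dist z y * (ρ z)⁻¹ ≤ (Real.sqrt n * (r/2)) * (ρ z)⁻¹ := by
        apply mul_le_mul_of_nonneg_right h1 (by positivity)
      calc dist z y * (ρ z)⁻¹ ≤ (Real.sqrt n * (r/2)) * (ρ z)⁻¹ := h2
        _ = β * t := by rw [hβdef, htdef]; field_simp
    have hs := (hshen z y).2
    have he : (ρ z)⁻¹ / (ρ y)⁻¹ = ρ y / ρ z := by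
      field_simp
    rw [he] at hs
    have hmono : (1 + dist z y * (ρ z)⁻¹) ^ α ≤ (1 + β * t) ^ α := by
      apply Real.rpow_le_rpow (by positivity) (by linarith) hα0
    have hfin : ρ y / ρ z ≤ C₀ * (1 + β * t) ^ α := le_trans hs
      (by nlinarith [Real.rpow_nonneg (by positivity : (0:ℝ) ≤ 1 + dist z y * (ρ z)⁻¹) α])
    rw [div_le_iff₀ hρz] at hfin
    linarith [hfin]
  set Sb : ℝ := C₀ * ρ z * (1 + β * t) ^ α with hSb
  have hSbpos : 0 < Sb := by
    have := Real.rpow_pos_of_pos (show (0:ℝ) < 1 + β * t by positivity) α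
    rw [hSb]; positivity
  set s := sSup (ρ '' dyadicCube k m) with hs
  have hbdd : BddAbove (ρ '' dyadicCube k m) := by
    refine ⟨Sb, ?_⟩
    rintro _ ⟨y, hy, rfl⟩
    exact hub y hy
  have hzmem : z ∈ dyadicCube k m := dcenter_mem k m
  have hsz : ρ z ≤ s := le_csSup hbdd ⟨z, hzmem, rfl⟩
  have hsSb : s ≤ Sb := csSup_le ⟨ρ z, ⟨z, hzmem, rfl⟩⟩ (by rintro _ ⟨y, hy, rfl⟩; exact hub y hy)
  have hspos : 0 < s := lt_of_lt_of_le hρz hsz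
  have hdiv : t / (C₀ * (1 + β * t) ^ α) ≤ r / s := by
    have h1 : r / Sb ≤ r / s := div_le_div_of_nonneg_left hrpos.le hspos hsSb
    have h2 : r / Sb = t / (C₀ * (1 + β * t) ^ α) := by
      rw [hSb, htdef, div_div]
      congr 1
      ring
    rw [← h2]; exact h1
  have hbase : (C₀ * max 1 β)⁻¹ * (1 + t) ^ (1 - α) ≤ 1 + r / s := by
    calc (C₀ * max 1 β)⁻¹ * (1 + t) ^ (1 - α)
        ≤ 1 + t / (C₀ * (1 + β * t) ^ α) := key_ineq hC₀.le hα0 hα1 hβ ht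
      _ ≤ 1 + r / s := by linarith
  have hA0 : (0:ℝ) < C₀ * max 1 β := by
    have h1 : (1:ℝ) ≤ max 1 β := le_max_left _ _
    nlinarith
  have h1mα : 1 - α = 1 / (l₀ + 1) := by
    rw [hα]; field_simp; ring
  have hLpos : (0:ℝ) < (C₀ * max 1 β)⁻¹ * (1 + t) ^ (1 - α) := by
    have := Real.rpow_pos_of_pos (show (0:ℝ) < 1 + t by linarith) (1 - α)
    positivity
  have hfinal : ((C₀ * max 1 β)⁻¹ * (1 + t) ^ (1 - α)) ^ η₂ ≤ (1 + r / s) ^ η₂ :=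
    Real.rpow_le_rpow hLpos.le hbase hη₂.le
  have heq : ((C₀ * max 1 β)⁻¹ * (1 + t) ^ (1 - α)) ^ η₂
      = ((C₀ * max 1 β) ^ η₂)⁻¹ * (1 + t) ^ (η₂ / (l₀ + 1)) := by
    rw [Real.mul_rpow (by positivity) (Real.rpow_nonneg (by linarith) _),
      Real.inv_rpow (by positivity), ← Real.rpow_mul (by linarith : (0:ℝ) ≤ 1 + t), h1mα]
    congr 1
    ring
  rw [psiD, ← hr, ← hs]
  calc ((C₀ * max 1 (Real.sqrt n / 2)) ^ η₂)⁻¹ * (1 + r / ρ z) ^ (η₂ / (l₀ + 1))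
      = ((C₀ * max 1 β) ^ η₂)⁻¹ * (1 + t) ^ (η₂ / (l₀ + 1)) := by rw [hβdef, htdef]
    _ = ((C₀ * max 1 β)⁻¹ * (1 + t) ^ (1 - α)) ^ η₂ := heq.symm
    _ ≤ (1 + r / s) ^ η₂ := hfinal

/-! ### The per-cube estimate -/

lemma percube {n : ℕ} (ρ : EuclideanSpace ℝ (Fin n) → ℝ) (hρ : ∀ x, 0 < ρ x)
    {l₀ C₀ : ℝ} (hl₀ : 0 < l₀) (hC₀ : 1 < C₀)
    (hshen : ∀ x y : EuclideanSpace ℝ (Fin n),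
      C₀⁻¹ * (1 + dist x y * (ρ x)⁻¹) ^ (-l₀) ≤ (ρ x)⁻¹ / (ρ y)⁻¹ ∧
        (ρ x)⁻¹ / (ρ y)⁻¹ ≤ C₀ * (1 + dist x y * (ρ x)⁻¹) ^ (l₀ / (l₀ + 1)))
    {η₂ : ℝ} (hη₂ : 0 < η₂)
    (f g : EuclideanSpace ℝ (Fin n) → ℝ≥0∞) (hf : Measurable f)
    (lam : ℝ≥0∞) (hlam0 : lam ≠ 0) (hlamT : lam ≠ ⊤) (k : ℤ) (m : Fin n → ℤ)
    (hcond : lam < (ENNReal.ofReal (psiD ρ η₂ k m) * volume (dyadicCube k m))⁻¹ *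
      ∫⁻ y in dyadicCube k m, f y) :
    ∫⁻ y in dyadicCube k m, g y ≤
      ENNReal.ofReal ((C₀ * max 1 (Real.sqrt n / 2)) ^ η₂) * lam⁻¹ *
        ∫⁻ x in dyadicCube k m, f x * MVcube ρ (η₂ / (l₀ + 1)) g x := by
  set Q := dyadicCube k m with hQ
  set z := dcenter k m with hz
  set r : ℝ := (2:ℝ) ^ k with hr
  have hrpos : (0:ℝ) < r := by positivity
  set A : ℝ := (C₀ * max 1 (Real.sqrt n / 2)) ^ η₂ with hA
  have hApos : 0 < A := by
    have h1 : (1:ℝ) ≤ max 1 (Real.sqrt n / 2) := le_max_left _ _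
    have : (0:ℝ) < C₀ * max 1 (Real.sqrt n / 2) := by nlinarith
    exact Real.rpow_pos_of_pos this _
  set u : ℝ := (1 + r / ρ z) ^ (η₂ / (l₀ + 1)) with hu
  have hupos : 0 < u := by
    have hz' := hρ z
    have : (0:ℝ) < 1 + r / ρ z := by positivity
    exact Real.rpow_pos_of_pos this _
  have hpsi : A⁻¹ * u ≤ psiD ρ η₂ k m := psiD_lower ρ hρ hl₀ hC₀ hshen hη₂ k m
  have hpsipos : 0 < psiD ρ η₂ k m := lt_of_lt_of_le (by positivity) hpsi
  set v : ℝ≥0∞ := volume Q with hv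
  have hvval : v = (ENNReal.ofReal r) ^ n := by rw [hv, hQ, volume_dyadicCube]
  have hv0 : v ≠ 0 := by
    rw [hvval]; exact pow_ne_zero _ (by simp [ENNReal.ofReal_eq_zero]; linarith)
  have hvT : v ≠ ⊤ := by rw [hvval]; exact ENNReal.pow_ne_top ENNReal.ofReal_ne_top
  set a : ℝ≥0∞ := ENNReal.ofReal (psiD ρ η₂ k m) * v with ha
  have ha0 : a ≠ 0 := by
    rw [ha]; exact mul_ne_zero (by simp [ENNReal.ofReal_eq_zero]; linarith) hv0
  have haT : a ≠ ⊤ := by rw [ha]; exact ENNReal.mul_ne_top ENNReal.ofReal_ne_top hvT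
  have hIf : lam * a ≤ ∫⁻ y in Q, f y := by
    have h1 : lam < (∫⁻ y in Q, f y) / a := by
      rw [ENNReal.div_eq_inv_mul]; exact hcond
    exact ((ENNReal.lt_div_iff_mul_lt (Or.inl ha0) (Or.inl haT)).mp h1).le
  set Ig : ℝ≥0∞ := ∫⁻ y in Q, g y with hIg
  set B : ℝ≥0∞ := (ENNReal.ofReal u * v)⁻¹ * Ig with hB
  have hMV : ∀ x ∈ Q, B ≤ MVcube ρ (η₂ / (l₀ + 1)) g x := by
    intro x hx
    have hterm : B ≤ (ENNReal.ofReal ((1 + r / ρ z) ^ (η₂ / (l₀ + 1))) * volume (cube z r))⁻¹ *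
        ∫⁻ y in cube z r, g y := by
      rw [hB, volume_cube, ← hvval, ← hu]
      exact mul_le_mul_right (lintegral_mono_set (dyadic_subset_cube k m)) _
    refine le_trans hterm ?_
    exact le_iSup_of_le z (le_iSup_of_le r (le_iSup_of_le ⟨hrpos, dyadic_subset_cube k m hx⟩ le_rfl))
  have hInt : (∫⁻ y in Q, f y) * B ≤ ∫⁻ x in Q, f x * MVcube ρ (η₂ / (l₀ + 1)) g x := by
    rw [← lintegral_mul_const B hf]
    exact setLIntegral_mono' (measurableSet_dyadicCube k m)
      (fun x hx => mul_le_mul_right (hMV x hx) (f x))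
  have hCpsi : ENNReal.ofReal u ≤ ENNReal.ofReal A * ENNReal.ofReal (psiD ρ η₂ k m) := by
    rw [← ENNReal.ofReal_mul hApos.le]
    apply ENNReal.ofReal_le_ofReal
    calc u = A * (A⁻¹ * u) := by field_simp
      _ ≤ A * psiD ρ η₂ k m := by nlinarith
  have hu0 : ENNReal.ofReal u ≠ 0 := by simp [ENNReal.ofReal_eq_zero]; linarith
  have huT : ENNReal.ofReal u ≠ ⊤ := ENNReal.ofReal_ne_top
  have hone : (1:ℝ≥0∞) ≤ ENNReal.ofReal A * ENNReal.ofReal (psiD ρ η₂ k m) *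
      (ENNReal.ofReal u)⁻¹ := by
    calc (1:ℝ≥0∞) = ENNReal.ofReal u * (ENNReal.ofReal u)⁻¹ :=
          (ENNReal.mul_inv_cancel hu0 huT).symm
      _ ≤ _ := mul_le_mul_left hCpsi _
  have hstep : Ig ≤ ENNReal.ofReal A * lam⁻¹ * ((lam * a) * B) := by
    have he : ENNReal.ofReal A * lam⁻¹ * ((lam * a) * B)
        = (lam⁻¹ * lam) * ((ENNReal.ofReal A * ENNReal.ofReal (psiD ρ η₂ k m) *
            (ENNReal.ofReal u)⁻¹) * (v * v⁻¹) * Ig) := by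
      rw [ha, hB, ENNReal.mul_inv (Or.inl hu0) (Or.inl huT)]
      ring
    rw [he, ENNReal.inv_mul_cancel hlam0 hlamT, one_mul]
    calc Ig = 1 * 1 * Ig := by rw [one_mul, one_mul]
      _ ≤ _ := by
          apply mul_le_mul_left
          exact mul_le_mul' hone (le_of_eq (ENNReal.mul_inv_cancel hv0 hvT).symm)
  calc Ig ≤ ENNReal.ofReal A * lam⁻¹ * ((lam * a) * B) := hstep
    _ ≤ ENNReal.ofReal A * lam⁻¹ * ((∫⁻ y in Q, f y) * B) :=
        mul_le_mul_right (mul_le_mul_left hIf _) _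
    _ ≤ _ := mul_le_mul_right hInt _

/-! ### Main theorem -/

/-- weak (1,1) bound for the dyadic localized maximal operator against
a weight: `∫_{{M^Δ_{V,η₂}f > λ}} g ≤ C λ⁻¹ ∫ f · M_{V,η₁}g`, `η₁ = η₂/(l₀+1)`. -/
theorem stmt12 {n : ℕ} (ρ : EuclideanSpace ℝ (Fin n) → ℝ) (hρ : ∀ x, 0 < ρ x)
    (l₀ C₀ : ℝ) (hl₀ : 0 < l₀) (hC₀ : 1 < C₀)
    (hshen : ∀ x y : EuclideanSpace ℝ (Fin n),
      C₀⁻¹ * (1 + dist x y * (ρ x)⁻¹) ^ (-l₀) ≤ (ρ x)⁻¹ / (ρ y)⁻¹ ∧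
        (ρ x)⁻¹ / (ρ y)⁻¹ ≤ C₀ * (1 + dist x y * (ρ x)⁻¹) ^ (l₀ / (l₀ + 1)))
    (η₂ : ℝ) (hη₂ : 0 < η₂) :
    ∃ C : ℝ≥0∞, C ≠ ⊤ ∧
      ∀ f g : EuclideanSpace ℝ (Fin n) → ℝ≥0∞, Measurable f → Measurable g →
        ∀ lam : ℝ≥0∞, 0 < lam →
          ∫⁻ y in {x | lam < MDyadic ρ η₂ f x}, g y
            ≤ C * lam⁻¹ * ∫⁻ x, f x * MVcube ρ (η₂ / (l₀ + 1)) g x := by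
  classical
  refine ⟨ENNReal.ofReal ((C₀ * max 1 (Real.sqrt n / 2)) ^ η₂), ENNReal.ofReal_ne_top, ?_⟩
  intro f g hf hg lam hlam
  by_cases hlamT : lam = ⊤
  · have hempty : {x | lam < MDyadic ρ η₂ f x} = (∅ : Set (EuclideanSpace ℝ (Fin n))) := by
      ext x; simp [hlamT]
    rw [hempty]
    simp
  have hlam0 : lam ≠ 0 := hlam.ne'
  set C : ℝ≥0∞ := ENNReal.ofReal ((C₀ * max 1 (Real.sqrt n / 2)) ^ η₂) with hCdef
  set K : ℝ≥0∞ := C * lam⁻¹ with hKdef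
  set F : EuclideanSpace ℝ (Fin n) → ℝ≥0∞ :=
    fun x => f x * MVcube ρ (η₂ / (l₀ + 1)) g x with hFdef
  set cond : ℤ × (Fin n → ℤ) → Prop := fun p =>
    lam < (ENNReal.ofReal (psiD ρ η₂ p.1 p.2) * volume (dyadicCube p.1 p.2))⁻¹ *
      ∫⁻ y in dyadicCube p.1 p.2, f y with hconddef
  obtain ⟨e, he⟩ := exists_surjective_nat (ℤ × (Fin n → ℤ))
  set A : ℕ → Set (EuclideanSpace ℝ (Fin n)) := fun j =>
    if cond (e j) then dyadicCube (e j).1 (e j).2 else ∅ with hAdef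
  have hAval : ∀ j, A j = if cond (e j) then dyadicCube (e j).1 (e j).2 else ∅ := fun j => rfl
  have hAmeas : ∀ j, MeasurableSet (A j) := by
    intro j
    rw [hAval]
    split
    · exact measurableSet_dyadicCube _ _
    · exact MeasurableSet.empty
  have hE : {x | lam < MDyadic ρ η₂ f x} = ⋃ j, A j := by
    ext x
    simp only [Set.mem_setOf_eq, Set.mem_iUnion, MDyadic, lt_iSup_iff]
    constructor
    · rintro ⟨k, m, hx, hlt⟩
      obtain ⟨j, hj⟩ := he (k, m)
      refine ⟨j, ?_⟩
      have hc : cond (e j) := by rw [hj]; exact hlt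
      rw [hAval, if_pos hc, hj]
      exact hx
    · rintro ⟨j, hj⟩
      by_cases hc : cond (e j)
      · rw [hAval, if_pos hc] at hj
        exact ⟨(e j).1, (e j).2, hj, hc⟩
      · rw [hAval, if_neg hc] at hj
        exact absurd hj (Set.notMem_empty x)
  have hEmeas : MeasurableSet {x | lam < MDyadic ρ η₂ f x} := by
    rw [hE]; exact MeasurableSet.iUnion hAmeas
  set ν : Measure (EuclideanSpace ℝ (Fin n)) := volume.withDensity g with hν
  have hνA : ∀ (s : Set (EuclideanSpace ℝ (Fin n))), MeasurableSet s →
      ν s = ∫⁻ y in s, g y := fun s hs => withDensity_apply g hs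
  have hpercube : ∀ j, cond (e j) → ν (A j) ≤ K * ∫⁻ x in A j, F x := by
    intro j hc
    rw [hAval, if_pos hc, hνA _ (measurableSet_dyadicCube _ _)]
    exact percube ρ hρ hl₀ hC₀ hshen hη₂ f g hf lam hlam0 hlamT (e j).1 (e j).2 hc
  have key : ∀ N : ℕ, ∀ T : Finset ℕ, T.card ≤ N →
      ν (⋃ j ∈ T, A j) ≤ K * ∫⁻ x in ⋃ j ∈ T, A j, F x := by
    intro N
    induction N with
    | zero =>
      intro T hT
      have : T = ∅ := Finset.card_eq_zero.mp (le_antisymm hT (Nat.zero_le _))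
      subst this
      simp
    | succ N ih =>
      intro T hT
      set T' := T.filter (fun j => cond (e j)) with hT'def
      have hUT : (⋃ j ∈ T, A j) = ⋃ j ∈ T', A j := by
        apply subset_antisymm
        · intro x hx
          simp only [Set.mem_iUnion] at hx ⊢
          obtain ⟨j, hjT, hjx⟩ := hx
          by_cases hc : cond (e j)
          · exact ⟨j, Finset.mem_filter.mpr ⟨hjT, hc⟩, hjx⟩
          · rw [hAval, if_neg hc] at hjx
            exact absurd hjx (Set.notMem_empty x)
        · intro x hx
          simp only [Set.mem_iUnion] at hx ⊢
          obtain ⟨j, hjT, hjx⟩ := hx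
          exact ⟨j, Finset.mem_of_mem_filter j hjT, hjx⟩
      rcases T'.eq_empty_or_nonempty with h0 | hne
      · rw [hUT, h0]
        simp
      · obtain ⟨j₀, hj₀T', hmax⟩ := Finset.exists_max_image T' (fun j => (e j).1) hne
        have hcondj₀ : cond (e j₀) := (Finset.mem_filter.mp hj₀T').2
        set D := (T'.erase j₀).filter (fun j => Disjoint (A j) (A j₀)) with hDdef
        have hDcard : D.card ≤ N := by
          have h1 : D.card ≤ (T'.erase j₀).card := Finset.card_filter_le _ _
          have h2 : (T'.erase j₀).card < T'.card := Finset.card_erase_lt_of_mem hj₀T'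
          have h3 : T'.card ≤ T.card := Finset.card_filter_le _ _
          omega
        have hcover : (⋃ j ∈ T', A j) ⊆ A j₀ ∪ ⋃ j ∈ D, A j := by
          intro x hx
          simp only [Set.mem_iUnion] at hx
          obtain ⟨j, hjT', hjx⟩ := hx
          by_cases hj : j = j₀
          · subst hj; left; exact hjx
          · by_cases hd : Disjoint (A j) (A j₀)
            · right
              exact Set.mem_biUnion (Finset.mem_filter.mpr
                ⟨Finset.mem_erase.mpr ⟨hj, hjT'⟩, hd⟩) hjx
            · left
              have hcj : cond (e j) := (Finset.mem_filter.mp hjT').2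
              have hAj : A j = dyadicCube (e j).1 (e j).2 := by rw [hAval, if_pos hcj]
              have hAj₀ : A j₀ = dyadicCube (e j₀).1 (e j₀).2 := by rw [hAval, if_pos hcondj₀]
              have hkk : (e j).1 ≤ (e j₀).1 := hmax j hjT'
              have hnd : (dyadicCube (e j).1 (e j).2 ∩
                  dyadicCube (e j₀).1 (e j₀).2 : Set (EuclideanSpace ℝ (Fin n))).Nonempty := by
                rw [← hAj, ← hAj₀]
                rw [Set.not_disjoint_iff_nonempty_inter] at hd
                exact hd
              rw [hAj₀]
              exact dyadic_nested hkk hnd (hAj ▸ hjx)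
        have hdisj : Disjoint (A j₀) (⋃ j ∈ D, A j) := by
          rw [Set.disjoint_iUnion_right]
          intro j
          rw [Set.disjoint_iUnion_right]
          intro hjD
          exact ((Finset.mem_filter.mp hjD).2).symm
        have hmeasU : MeasurableSet (⋃ j ∈ D, A j) :=
          MeasurableSet.biUnion (Finset.countable_toSet D) (fun j _ => hAmeas j)
        have hsub : A j₀ ∪ (⋃ j ∈ D, A j) ⊆ ⋃ j ∈ T, A j := by
          rw [hUT]
          apply Set.union_subset
          · exact Set.subset_biUnion_of_mem hj₀T'
          · intro x hx
            simp only [Set.mem_iUnion] at hx ⊢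
            obtain ⟨j, hjD, hjx⟩ := hx
            exact ⟨j, Finset.mem_of_mem_erase (Finset.mem_of_mem_filter j hjD), hjx⟩
        calc ν (⋃ j ∈ T, A j) = ν (⋃ j ∈ T', A j) := by rw [hUT]
          _ ≤ ν (A j₀ ∪ ⋃ j ∈ D, A j) := measure_mono hcover
          _ ≤ ν (A j₀) + ν (⋃ j ∈ D, A j) := measure_union_le _ _
          _ ≤ K * (∫⁻ x in A j₀, F x) + K * ∫⁻ x in ⋃ j ∈ D, A j, F x :=
              add_le_add (hpercube j₀ hcondj₀) (ih D hDcard)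
          _ = K * ((∫⁻ x in A j₀, F x) + ∫⁻ x in ⋃ j ∈ D, A j, F x) := (mul_add _ _ _).symm
          _ = K * ∫⁻ x in A j₀ ∪ ⋃ j ∈ D, A j, F x := by
              rw [lintegral_union hmeasU hdisj]
          _ ≤ K * ∫⁻ x in ⋃ j ∈ T, A j, F x :=
              mul_le_mul_right (lintegral_mono_set hsub) _
  have hmono : Monotone (fun N : ℕ => ⋃ j ∈ Finset.range N, A j) := by
    intro N M hNM
    apply Set.biUnion_subset_biUnion_left
    intro j hj
    exact Finset.mem_range.mpr (lt_of_lt_of_le (Finset.mem_range.mp hj) hNM)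
  have hUnion : (⋃ N : ℕ, ⋃ j ∈ Finset.range N, A j) = ⋃ j, A j := by
    apply subset_antisymm
    · apply Set.iUnion_subset
      intro N
      apply Set.iUnion₂_subset
      intro j _
      exact Set.subset_iUnion A j
    · apply Set.iUnion_subset
      intro j
      intro x hx
      exact Set.mem_iUnion.mpr ⟨j + 1, Set.mem_biUnion (Finset.mem_range.mpr (Nat.lt_succ_self j)) hx⟩
  have hgoal : ∫⁻ y in {x | lam < MDyadic ρ η₂ f x}, g y = ν {x | lam < MDyadic ρ η₂ f x} :=
    (hνA _ hEmeas).symm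
  rw [hgoal, hE, ← hUnion, hmono.measure_iUnion]
  apply iSup_le
  intro N
  calc ν (⋃ j ∈ Finset.range N, A j) ≤ K * ∫⁻ x in ⋃ j ∈ Finset.range N, A j, F x :=
        key (Finset.range N).card (Finset.range N) le_rfl
    _ ≤ K * ∫⁻ x, F x := mul_le_mul_right (setLIntegral_le_lintegral _ _) _
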